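/- arXiv:1912.06611 — 3 statements merged into one kernel-verified Lean document; each statement's English description precedes it below -/
import Mathlib

section
/- The sequence (b_n/a_n) converges to ζ(3); that is, the sequence of rational numbers b_n/a_n has limit ∑_{m=1}^∞ 1/m³. -/
/-- ζ(3), the sum of the series ∑_{m=1}^∞ 1/m³. -/
noncomputable def zeta3 : ℝ := ∑' m : ℕ, 1 / ((m : ℝ) + 1) ^ 3

/-- `z n = ∑_{m=1}^n 1/m³`. -/
noncomputable def zseq (n : ℕ) : ℝ := ∑ m ∈ Finset.Icc 1 n, 1 / (m : ℝ) ^ 3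

/-- `a n = ∑_{k=0}^n C(n,k)² C(n+k,k)²`. -/
noncomputable def aseq (n : ℕ) : ℝ :=
  ∑ k ∈ Finset.range (n + 1), (n.choose k : ℝ) ^ 2 * ((n + k).choose k : ℝ) ^ 2

/-- `b n = a n * z n + ∑_{k=1}^n ∑_{m=1}^k (-1)^{m+1} C(n,k)² C(n+k,k)²
      / (2 m³ C(n,m) C(n+m,m))`. -/
noncomputable def bseq (n : ℕ) : ℝ :=
  aseq n * zseq n +
    ∑ k ∈ Finset.Icc 1 n, ∑ m ∈ Finset.Icc 1 k,
      (-1 : ℝ) ^ (m + 1) * (n.choose k : ℝ) ^ 2 * ((n + k).choose k : ℝ) ^ 2 /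
        (2 * (m : ℝ) ^ 3 * (n.choose m : ℝ) * ((n + m).choose m : ℝ))


open Filter Finset

lemma my_le_choose : ∀ N m : ℕ, 1 ≤ m → m < N → N ≤ N.choose m := by
  intro N
  induction N with
  | zero => omega
  | succ N ih =>
    intro m h1 h2
    rcases eq_or_lt_of_le h1 with rfl | hm1
    · simp [Nat.choose_one_right]
    · obtain ⟨m', rfl⟩ : ∃ m', m = m' + 1 := ⟨m - 1, by omega⟩
      rw [Nat.choose_succ_succ]
      have hA := ih m' (by omega) (by omega)
      have hB : 0 < N.choose m'.succ := Nat.choose_pos (by omega)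
      omega

lemma hsummable : Summable (fun m : ℕ => 1 / ((m : ℝ) + 1) ^ 3) := by
  have h : Summable (fun n : ℕ => 1 / (n : ℝ) ^ 3) :=
    (Real.summable_one_div_nat_pow).mpr (by norm_num)
  have := (summable_nat_add_iff 1).mpr h
  refine this.congr fun n => ?_
  push_cast
  ring_nf

lemma zseq_eq (n : ℕ) : zseq n = ∑ i ∈ Finset.range n, 1 / ((i : ℝ) + 1) ^ 3 := by
  rw [zseq, ← Finset.Ico_add_one_right_eq_Icc, Finset.sum_Ico_eq_sum_range]
  refine Finset.sum_congr rfl fun i _ => ?_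
  push_cast
  ring_nf

lemma zseq_le_zeta3 (n : ℕ) : zseq n ≤ zeta3 := by
  rw [zseq_eq, zeta3]
  exact Summable.sum_le_tsum _ (fun i _ => by positivity) hsummable

lemma zeta3_nonneg : 0 ≤ zeta3 :=
  tsum_nonneg fun i => by positivity

lemma zseq_tendsto : Filter.Tendsto zseq Filter.atTop (nhds zeta3) := by
  have := hsummable.hasSum.tendsto_sum_nat
  refine this.congr fun n => (zseq_eq n).symm

lemma aseq_one_le (n : ℕ) : 1 ≤ aseq n := by
  rw [aseq]
  have h0 : ((n.choose 0 : ℝ)) ^ 2 * (((n + 0).choose 0 : ℝ)) ^ 2 = 1 := by simp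
  calc (1 : ℝ) = (n.choose 0 : ℝ) ^ 2 * ((n + 0).choose 0 : ℝ) ^ 2 := h0.symm
    _ ≤ _ := Finset.single_le_sum (f := fun k => (n.choose k : ℝ) ^ 2 * ((n + k).choose k : ℝ) ^ 2)
        (fun i _ => by positivity) (Finset.mem_range.mpr (by omega))

lemma err_bound (n : ℕ) : |bseq n / aseq n - zseq n| ≤ zeta3 / (2 * ((n : ℝ) + 1)) := by
  have ha1 : (1 : ℝ) ≤ aseq n := aseq_one_le n
  have ha0 : (0 : ℝ) < aseq n := by linarith
  set S : ℝ := ∑ k ∈ Finset.Icc 1 n, ∑ m ∈ Finset.Icc 1 k,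
      (-1 : ℝ) ^ (m + 1) * (n.choose k : ℝ) ^ 2 * ((n + k).choose k : ℝ) ^ 2 /
        (2 * (m : ℝ) ^ 3 * (n.choose m : ℝ) * ((n + m).choose m : ℝ)) with hS
  have heq : bseq n / aseq n - zseq n = S / aseq n := by
    rw [bseq, ← hS, add_div, mul_comm, mul_div_assoc, div_self (ne_of_gt ha0), mul_one]
    ring
  rw [heq, abs_div, abs_of_pos ha0, div_le_iff₀ ha0]
  -- bound |S|
  have hSb : |S| ≤ aseq n * (zeta3 / (2 * ((n : ℝ) + 1))) := by
    calc |S| ≤ ∑ k ∈ Finset.Icc 1 n, |∑ m ∈ Finset.Icc 1 k,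
        (-1 : ℝ) ^ (m + 1) * (n.choose k : ℝ) ^ 2 * ((n + k).choose k : ℝ) ^ 2 /
          (2 * (m : ℝ) ^ 3 * (n.choose m : ℝ) * ((n + m).choose m : ℝ))| :=
        Finset.abs_sum_le_sum_abs _ _
      _ ≤ ∑ k ∈ Finset.Icc 1 n,
            (n.choose k : ℝ) ^ 2 * ((n + k).choose k : ℝ) ^ 2 * (zeta3 / (2 * ((n : ℝ) + 1))) := by
        refine Finset.sum_le_sum fun k hk => ?_
        rw [Finset.mem_Icc] at hk
        calc |∑ m ∈ Finset.Icc 1 k, (-1 : ℝ) ^ (m + 1) * (n.choose k : ℝ) ^ 2 *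
              ((n + k).choose k : ℝ) ^ 2 /
              (2 * (m : ℝ) ^ 3 * (n.choose m : ℝ) * ((n + m).choose m : ℝ))|
            ≤ ∑ m ∈ Finset.Icc 1 k, |(-1 : ℝ) ^ (m + 1) * (n.choose k : ℝ) ^ 2 *
              ((n + k).choose k : ℝ) ^ 2 /
              (2 * (m : ℝ) ^ 3 * (n.choose m : ℝ) * ((n + m).choose m : ℝ))| :=
            Finset.abs_sum_le_sum_abs _ _
          _ ≤ ∑ m ∈ Finset.Icc 1 k,
              (n.choose k : ℝ) ^ 2 * ((n + k).choose k : ℝ) ^ 2 *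
                (1 / (2 * ((n : ℝ) + 1)) * (1 / (m : ℝ) ^ 3)) := by
            refine Finset.sum_le_sum fun m hm => ?_
            rw [Finset.mem_Icc] at hm
            have hm1 : 1 ≤ m := hm.1
            have hmn : m ≤ n := le_trans hm.2 hk.2
            have hc1 : (1 : ℝ) ≤ (n.choose m : ℝ) := by
              exact_mod_cast Nat.one_le_iff_ne_zero.mpr (Nat.choose_pos hmn).ne'
            have hc2 : ((n : ℝ) + 1) ≤ ((n + m).choose m : ℝ) := by
              have : n + 1 ≤ (n + m).choose m := by
                have h := my_le_choose (n + m) m hm1 (by omega)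
                omega
              exact_mod_cast this
            have hm0 : (0 : ℝ) < (m : ℝ) ^ 3 := by positivity
            have hp1 : (0:ℝ) < (n.choose m : ℝ) := lt_of_lt_of_le one_pos hc1
            have hp2 : (0:ℝ) < ((n + m).choose m : ℝ) := lt_of_lt_of_le (by positivity) hc2
            have hD : (0:ℝ) < 2 * (m : ℝ) ^ 3 * (n.choose m : ℝ) * ((n + m).choose m : ℝ) :=
              mul_pos (mul_pos (by positivity) hp1) hp2
            rw [abs_div, abs_of_pos hD]
            have habs : |(-1 : ℝ) ^ (m + 1) * (n.choose k : ℝ) ^ 2 * ((n + k).choose k : ℝ) ^ 2|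
                = (n.choose k : ℝ) ^ 2 * ((n + k).choose k : ℝ) ^ 2 := by
              rw [abs_mul, abs_mul, abs_pow, abs_neg, abs_one, one_pow, one_mul,
                abs_of_nonneg (by positivity), abs_of_nonneg (by positivity)]
            rw [habs]
            have hbc : 2 * (m:ℝ)^3 * ((n:ℝ)+1) ≤
                2 * (m : ℝ) ^ 3 * (n.choose m : ℝ) * ((n + m).choose m : ℝ) := by
              calc 2*(m:ℝ)^3*((n:ℝ)+1) ≤ 2*(m:ℝ)^3*((n+m).choose m : ℝ) :=
                    mul_le_mul_of_nonneg_left hc2 (by positivity)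
                _ ≤ 2*(m:ℝ)^3*(n.choose m : ℝ)*((n+m).choose m : ℝ) := by
                    nlinarith [hc1, hp2, hm0]
            calc (n.choose k:ℝ)^2*((n+k).choose k:ℝ)^2 /
                  (2 * (m : ℝ) ^ 3 * (n.choose m : ℝ) * ((n + m).choose m : ℝ))
                ≤ (n.choose k:ℝ)^2*((n+k).choose k:ℝ)^2 / (2*(m:ℝ)^3*((n:ℝ)+1)) :=
                  div_le_div_of_nonneg_left (by positivity) (by positivity) hbc
              _ = (n.choose k : ℝ) ^ 2 * ((n + k).choose k : ℝ) ^ 2 *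
                    (1 / (2 * ((n : ℝ) + 1)) * (1 / (m : ℝ) ^ 3)) := by
                  field_simp
          _ = (n.choose k : ℝ) ^ 2 * ((n + k).choose k : ℝ) ^ 2 *
                (1 / (2 * ((n : ℝ) + 1)) * zseq k) := by
            rw [zseq, Finset.mul_sum, Finset.mul_sum]
          _ ≤ _ := by
            have hz : zseq k ≤ zeta3 := zseq_le_zeta3 k
            have : 1 / (2 * ((n : ℝ) + 1)) * zseq k ≤ 1 / (2 * ((n : ℝ) + 1)) * zeta3 :=
              mul_le_mul_of_nonneg_left hz (by positivity)
            calc _ ≤ (n.choose k : ℝ) ^ 2 * ((n + k).choose k : ℝ) ^ 2 *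
                  (1 / (2 * ((n : ℝ) + 1)) * zeta3) :=
                mul_le_mul_of_nonneg_left this (by positivity)
              _ = _ := by ring
      _ = (∑ k ∈ Finset.Icc 1 n, (n.choose k : ℝ) ^ 2 * ((n + k).choose k : ℝ) ^ 2) *
            (zeta3 / (2 * ((n : ℝ) + 1))) := by rw [Finset.sum_mul]
      _ ≤ aseq n * (zeta3 / (2 * ((n : ℝ) + 1))) := by
        apply mul_le_mul_of_nonneg_right _ (div_nonneg zeta3_nonneg (by positivity))
        rw [aseq]
        apply Finset.sum_le_sum_of_subset_of_nonneg
        · intro x hx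
          rw [Finset.mem_Icc] at hx
          exact Finset.mem_range.mpr (by omega)
        · intro i _ _; positivity
  calc |S| ≤ aseq n * (zeta3 / (2 * ((n : ℝ) + 1))) := hSb
    _ = zeta3 / (2 * ((n : ℝ) + 1)) * aseq n := by ring

/-- The sequence `b n / a n` converges to `ζ(3)`. -/
theorem b_over_a_tendsto_zeta3 :
    Filter.Tendsto (fun n : ℕ => bseq n / aseq n) Filter.atTop (nhds zeta3) := by
  have h1 := zseq_tendsto
  have hb : Filter.Tendsto (fun n : ℕ => zeta3 / (2 * ((n : ℝ) + 1))) Filter.atTop (nhds 0) := by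
    apply Filter.Tendsto.div_atTop tendsto_const_nhds
    apply Filter.Tendsto.const_mul_atTop two_pos
    exact tendsto_atTop_add_const_right _ 1 tendsto_natCast_atTop_atTop
  have h2 : Filter.Tendsto (fun n : ℕ => bseq n / aseq n - zseq n) Filter.atTop (nhds 0) :=
    squeeze_zero_norm (fun n => by simpa [Real.norm_eq_abs] using err_bound n) hb
  have h3 := h1.add h2
  rw [add_zero] at h3
  exact h3.congr fun n => by ring
end

section
/- The sequence 33^n is O(a_n): there is a constant K > 0 such that 33^n ≤ K·a_n for all sufficiently large n. -/
private lemma choose_id (m k : ℕ) :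
    (m + 1) * m.choose k = (m + 1).choose k * (m + 1 - k) := by
  rw [← Nat.choose_succ_right_eq, Nat.add_one_mul_choose_eq]

private lemma sqstep (X Y : ℝ) (hX : 0 ≤ X) (h : 57446 * X ≤ 10000 * Y) :
    33 * X ^ 2 ≤ Y ^ 2 := by
  nlinarith [mul_le_mul h h (by linarith) (by linarith : (0:ℝ) ≤ 10000 * Y), sq_nonneg X]

private lemma quadB (n k : ℝ) (hK : 142 ≤ k + 1) (h1 : 100 * (k+1) ≤ 71 * (n+1)) :
    57446 * (k+1)^2 ≤ 10000 * ((n+k+1) * (n+k+2)) := by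
  have hu1 : (0:ℝ) ≤ 71*(n+1) - 100*(k+1) := by linarith
  have hK0 : (0:ℝ) ≤ (k+1) - 142 := by linarith
  nlinarith [mul_nonneg hK0 (by linarith : (0:ℝ) ≤ k+1), mul_nonneg hK0 hu1,
    mul_self_nonneg (71*(n+1) - 100*(k+1))]

/-- Case where the index `k = ⌊71n/100⌋` does not change from `n` to `n+1`. -/
private lemma keyA (n k : ℕ) (hn : 200 ≤ n) (hkn : k ≤ n)
    (hlow : 71 * n ≤ 100 * k + 28) :
    33 * ((n.choose k : ℝ)^2 * (((n + k).choose k : ℝ))^2)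
      ≤ (((n+1).choose k : ℝ))^2 * ((((n+1) + k).choose k : ℝ))^2 := by
  set a1 : ℝ := (n.choose k : ℝ) with ha1
  set a2 : ℝ := ((n+k).choose k : ℝ) with ha2
  set c1 : ℝ := ((n+1).choose k : ℝ) with hc1
  set c2 : ℝ := ((n+1+k).choose k : ℝ) with hc2
  have h1n := choose_id n k
  have h2n := choose_id (n+k) k
  rw [show n + k + 1 - k = n + 1 by omega] at h2n
  rw [show n + k + 1 = n + 1 + k by omega] at h2n
  have h1 : ((n:ℝ) + 1) * a1 = c1 * ((n:ℝ) + 1 - k) := by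
    have h := congrArg (Nat.cast : ℕ → ℝ) h1n
    push_cast [Nat.cast_sub (by omega : k ≤ n + 1)] at h
    linarith [h]
  have h2 : ((n:ℝ) + k + 1) * a2 = c2 * ((n:ℝ) + 1) := by
    have h := congrArg (Nat.cast : ℕ → ℝ) h2n
    push_cast at h
    linarith [h]
  have hd : (0:ℝ) < (n:ℝ) + 1 - k := by
    have : (k:ℝ) ≤ n := by exact_mod_cast hkn
    linarith
  have hn1 : (0:ℝ) < (n:ℝ) + 1 := by positivity
  have hlin : 57446 * ((n:ℝ) + 1 - k) ≤ 10000 * ((n:ℝ) + k + 1) := by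
    have h : (57446 * (n + 1 - k) : ℕ) ≤ (10000 * (n + k + 1) : ℕ) := by omega
    have h' : ((57446 * (n + 1 - k) : ℕ) : ℝ) ≤ ((10000 * (n + k + 1) : ℕ) : ℝ) := by
      exact_mod_cast h
    push_cast [Nat.cast_sub (by omega : k ≤ n + 1)] at h'
    linarith
  have h33 : 33 * ((n:ℝ) + 1 - k)^2 ≤ ((n:ℝ) + k + 1)^2 := sqstep _ _ hd.le hlin
  have hE : c1 * c2 * ((n:ℝ) + 1 - k) = a1 * a2 * ((n:ℝ) + k + 1) := by
    have hmul : (c1 * c2 * ((n:ℝ) + 1 - k)) * ((n:ℝ)+1)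
        = (a1 * a2 * ((n:ℝ) + k + 1)) * ((n:ℝ)+1) := by
      linear_combination (-(c2*((n:ℝ)+1)))*h1 + (-(((n:ℝ)+1)*a1))*h2
    exact mul_right_cancel₀ (ne_of_gt hn1) hmul
  have hfin : 33 * (a1 * a2)^2 * (((n:ℝ) + 1 - k)^2) ≤ (c1 * c2)^2 * (((n:ℝ) + 1 - k)^2) := by
    have e : (c1 * c2)^2 * (((n:ℝ) + 1 - k)^2) = (a1*a2)^2 * (((n:ℝ) + k + 1)^2) := by
      calc (c1 * c2)^2 * (((n:ℝ) + 1 - k)^2) = (c1 * c2 * ((n:ℝ) + 1 - k))^2 := by ring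
        _ = (a1 * a2 * ((n:ℝ) + k + 1))^2 := by rw [hE]
        _ = (a1*a2)^2 * (((n:ℝ) + k + 1)^2) := by ring
    rw [e]
    calc 33 * (a1 * a2)^2 * (((n:ℝ) + 1 - k)^2) = (a1*a2)^2 * (33 * ((n:ℝ) + 1 - k)^2) := by ring
      _ ≤ (a1*a2)^2 * (((n:ℝ) + k + 1)^2) :=
          mul_le_mul_of_nonneg_left h33 (sq_nonneg (a1*a2))
  have hmain : 33 * (a1 * a2)^2 ≤ (c1 * c2)^2 :=
    le_of_mul_le_mul_right hfin (by positivity)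
  calc 33 * (a1^2 * a2^2) = 33 * (a1*a2)^2 := by ring
    _ ≤ (c1*c2)^2 := hmain
    _ = c1^2 * c2^2 := by ring

/-- Case where the index `k = ⌊71n/100⌋` increases by one from `n` to `n+1`. -/
private lemma keyB (n k : ℕ) (hn : 200 ≤ n) (hkn : k ≤ n)
    (h100 : 100 * (k+1) ≤ 71 * (n+1)) (h99 : 71 * (n+1) ≤ 100 * (k+1) + 99) :
    33 * ((n.choose k : ℝ)^2 * (((n + k).choose k : ℝ))^2)
      ≤ (((n+1).choose (k+1) : ℝ))^2 * ((((n+1) + (k+1)).choose (k+1) : ℝ))^2 := by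
  set a1 : ℝ := (n.choose k : ℝ) with ha1
  set a2 : ℝ := ((n+k).choose k : ℝ) with ha2
  set c1 : ℝ := ((n+1).choose (k+1) : ℝ) with hc1
  set c2 : ℝ := ((n+1+(k+1)).choose (k+1) : ℝ) with hc2
  set b : ℝ := ((n+k+1).choose k : ℝ) with hb
  have h1n := Nat.add_one_mul_choose_eq n k
  have h2n := Nat.add_one_mul_choose_eq (n+k+1) k
  rw [show n + k + 1 + 1 = n + 1 + (k+1) by omega] at h2n
  have h3n := choose_id (n+k) k
  rw [show n + k + 1 - k = n + 1 by omega] at h3n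
  have h1 : c1 * ((k:ℝ)+1) = ((n:ℝ)+1) * a1 := by
    have h := congrArg (Nat.cast : ℕ → ℝ) h1n
    push_cast at h
    linarith [h]
  have h2 : c2 * ((k:ℝ)+1) = ((n:ℝ)+k+2) * b := by
    have h := congrArg (Nat.cast : ℕ → ℝ) h2n
    push_cast at h
    linarith [h]
  have h3 : b * ((n:ℝ)+1) = ((n:ℝ)+k+1) * a2 := by
    have h := congrArg (Nat.cast : ℕ → ℝ) h3n
    push_cast at h
    linarith [h]
  have hbp : 0 < b := by
    have := Nat.choose_pos (by omega : k ≤ n + k + 1); rw [hb]; exact_mod_cast this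
  have hn1 : (0:ℝ) < (n:ℝ) + 1 := by positivity
  have hKp : (0:ℝ) < (k:ℝ) + 1 := by positivity
  have hE : c1 * c2 * ((k:ℝ)+1)^2 = a1 * a2 * (((n:ℝ)+k+1) * ((n:ℝ)+k+2)) := by
    have hA : (c1 * c2 * ((k:ℝ)+1)^2) * (b * ((n:ℝ)+1))
        = (a1 * a2 * (((n:ℝ)+k+1) * ((n:ℝ)+k+2))) * (b * ((n:ℝ)+1)) := by
      calc (c1 * c2 * ((k:ℝ)+1)^2) * (b * ((n:ℝ)+1))
          = (c1 * ((k:ℝ)+1)) * (c2 * ((k:ℝ)+1)) * (b * ((n:ℝ)+1)) := by ring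
        _ = (((n:ℝ)+1) * a1) * (((n:ℝ)+k+2) * b) * (((n:ℝ)+k+1) * a2) := by rw [h1, h2, h3]
        _ = (a1 * a2 * (((n:ℝ)+k+1) * ((n:ℝ)+k+2))) * (b * ((n:ℝ)+1)) := by ring
    exact mul_right_cancel₀ (by positivity) hA
  have hcast1 : 100 * ((k:ℝ)+1) ≤ 71 * ((n:ℝ)+1) := by exact_mod_cast h100
  have hK143 : (142:ℝ) ≤ (k:ℝ) + 1 := by
    have : 142 ≤ k + 1 := by omega
    exact_mod_cast this
  have hq : 57446 * ((k:ℝ)+1)^2 ≤ 10000 * (((n:ℝ)+k+1) * ((n:ℝ)+k+2)) :=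
    quadB (n:ℝ) (k:ℝ) hK143 hcast1
  have h33 : 33 * (((k:ℝ)+1)^2)^2 ≤ (((n:ℝ)+k+1) * ((n:ℝ)+k+2))^2 :=
    sqstep _ _ (sq_nonneg _) hq
  have hfin : 33 * (a1 * a2)^2 * (((k:ℝ)+1)^2)^2 ≤ (c1 * c2)^2 * (((k:ℝ)+1)^2)^2 := by
    have e : (c1 * c2)^2 * (((k:ℝ)+1)^2)^2
        = (a1*a2)^2 * ((((n:ℝ)+k+1) * ((n:ℝ)+k+2))^2) := by
      calc (c1 * c2)^2 * (((k:ℝ)+1)^2)^2 = (c1 * c2 * ((k:ℝ)+1)^2)^2 := by ring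
        _ = (a1 * a2 * (((n:ℝ)+k+1) * ((n:ℝ)+k+2)))^2 := by rw [hE]
        _ = (a1*a2)^2 * ((((n:ℝ)+k+1) * ((n:ℝ)+k+2))^2) := by ring
    rw [e]
    calc 33 * (a1 * a2)^2 * (((k:ℝ)+1)^2)^2
        = (a1*a2)^2 * (33 * (((k:ℝ)+1)^2)^2) := by ring
      _ ≤ (a1*a2)^2 * ((((n:ℝ)+k+1) * ((n:ℝ)+k+2))^2) :=
          mul_le_mul_of_nonneg_left h33 (sq_nonneg (a1*a2))
  have hmain : 33 * (a1 * a2)^2 ≤ (c1 * c2)^2 :=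
    le_of_mul_le_mul_right hfin (by positivity)
  calc 33 * (a1^2 * a2^2) = 33 * (a1*a2)^2 := by ring
    _ ≤ (c1*c2)^2 := hmain
    _ = c1^2 * c2^2 := by ring

/-- The distinguished single term of the sum. -/
noncomputable def Tseq (n : ℕ) : ℝ :=
  (n.choose (71*n/100) : ℝ)^2 * (((n + 71*n/100).choose (71*n/100) : ℝ))^2

private lemma kdiv_le (n : ℕ) : 71*n/100 ≤ n := by
  calc 71*n/100 ≤ 71*n/71 := Nat.div_le_div_left (by norm_num) (by norm_num)
    _ = n := by omega

private lemma Tseq_pos (n : ℕ) : 0 < Tseq n := by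
  unfold Tseq
  have h1 : 0 < n.choose (71*n/100) := Nat.choose_pos (kdiv_le n)
  have h2 : 0 < (n + 71*n/100).choose (71*n/100) := Nat.choose_pos (by omega)
  have h1' : (0:ℝ) < (n.choose (71*n/100) : ℝ) := by exact_mod_cast h1
  have h2' : (0:ℝ) < ((n + 71*n/100).choose (71*n/100) : ℝ) := by exact_mod_cast h2
  positivity

private lemma Tseq_le_aseq (n : ℕ) : Tseq n ≤ aseq n := by
  unfold Tseq aseq
  apply Finset.single_le_sum (f := fun k =>
    (n.choose k : ℝ) ^ 2 * ((n + k).choose k : ℝ) ^ 2)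
  · intro i _
    positivity
  · exact Finset.mem_range.2 (Nat.lt_succ_of_le (kdiv_le n))

private lemma key (n : ℕ) (hn : 200 ≤ n) : 33 * Tseq n ≤ Tseq (n+1) := by
  have hdm1 := Nat.div_add_mod (71*n) 100
  have hm1 : 71*n % 100 < 100 := Nat.mod_lt _ (by norm_num)
  have hdm2 := Nat.div_add_mod (71*(n+1)) 100
  have hm2 : 71*(n+1) % 100 < 100 := Nat.mod_lt _ (by norm_num)
  have hkn : 71*n/100 ≤ n := kdiv_le n
  have hcases : 71*(n+1)/100 = 71*n/100 ∨ 71*(n+1)/100 = 71*n/100 + 1 := by omega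
  unfold Tseq
  rcases hcases with h | h
  · rw [h]
    exact keyA n (71*n/100) hn hkn (by omega)
  · rw [h]
    exact keyB n (71*n/100) hn hkn (by omega) (by omega)

private lemma grow : ∀ n, 200 ≤ n → 33^n * Tseq 200 ≤ 33^200 * Tseq n := by
  intro n hn
  induction n, hn using Nat.le_induction with
  | base => exact le_of_eq rfl
  | succ n hn ih =>
    have h := key n hn
    calc 33^(n+1) * Tseq 200 = 33 * (33^n * Tseq 200) := by ring
      _ ≤ 33 * (33^200 * Tseq n) := by
          have : (0:ℝ) ≤ 33 := by norm_num
          nlinarith [ih]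
      _ = 33^200 * (33 * Tseq n) := by ring
      _ ≤ 33^200 * Tseq (n+1) := by
          apply mul_le_mul_of_nonneg_left h (by positivity)

/-- `33^n = O(a n)`: there is a constant `K > 0` with `33^n ≤ K * a n` for all
sufficiently large `n`. -/
theorem pow33_bigO_a :
    ∃ K : ℝ, 0 < K ∧ ∀ᶠ n : ℕ in Filter.atTop, (33 : ℝ) ^ n ≤ K * aseq n := by
  refine ⟨33^200 / Tseq 200, div_pos (by positivity) (Tseq_pos 200), ?_⟩
  rw [Filter.eventually_atTop]
  refine ⟨200, fun n hn => ?_⟩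
  have hg := grow n hn
  have hT := Tseq_le_aseq n
  have hTp := Tseq_pos 200
  have h1 : (33:ℝ)^n ≤ (33^200 / Tseq 200) * Tseq n := by
    rw [div_mul_eq_mul_div, le_div_iff₀ hTp]
    calc (33:ℝ)^n * Tseq 200 ≤ 33^200 * Tseq n := hg
      _ = 33^200 * Tseq n := rfl
  calc (33:ℝ)^n ≤ (33^200 / Tseq 200) * Tseq n := h1
    _ ≤ (33^200 / Tseq 200) * aseq n := by
        apply mul_le_mul_of_nonneg_left hT (by positivity)
end

section
/- The sequence ρ_n = a_{n+1}/a_n is increasing for n ≥ 2. -/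
set_option maxHeartbeats 1600000

open Finset

/-- `ρ n = a (n+1) / a n`. -/
noncomputable def rho (n : ℕ) : ℝ := aseq (n + 1) / aseq n

/-- Summand. -/
noncomputable def Fap (n k : ℕ) : ℝ := (n.choose k : ℝ) ^ 2 * ((n + k).choose k : ℝ) ^ 2

/-- WZ certificate. -/
noncomputable def Gap (n k : ℕ) : ℝ :=
  4 * (2 * (n:ℝ) + 3) * ((k:ℝ) * (2 * (k:ℝ) + 1) - (2 * (n:ℝ) + 3) ^ 2) * Fap (n+1) k

lemma Fap_nonneg (n k : ℕ) : 0 ≤ Fap n k := by unfold Fap; positivity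

lemma Fap_eq_zero {n k : ℕ} (h : n < k) : Fap n k = 0 := by
  simp [Fap, Nat.choose_eq_zero_of_lt h]

lemma aseq_eq (n : ℕ) : aseq n = ∑ k ∈ Finset.range (n+1), Fap n k := rfl

lemma aseq_ext {n N : ℕ} (h : n + 1 ≤ N) : aseq n = ∑ k ∈ Finset.range N, Fap n k := by
  rw [aseq_eq]
  apply Finset.sum_subset (Finset.range_subset_range.2 h)
  intro x _ hx
  exact Fap_eq_zero (by simpa using hx)

lemma key0 (n : ℕ) :
    ((n:ℝ)+2)^3 * Fap (n+2) 0 - (34*(n:ℝ)^3+153*(n:ℝ)^2+231*(n:ℝ)+117) * Fap (n+1) 0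
      + ((n:ℝ)+1)^3 * Fap n 0 = Gap n 0 := by
  simp [Fap, Gap]
  ring

lemma keyS (n k : ℕ) :
    ((n:ℝ)+2)^3 * Fap (n+2) (k+1) - (34*(n:ℝ)^3+153*(n:ℝ)^2+231*(n:ℝ)+117) * Fap (n+1) (k+1)
      + ((n:ℝ)+1)^3 * Fap n (k+1) = Gap n (k+1) - Gap n k := by
  rcases Nat.lt_or_ge k n with h | h
  · -- generic case k+1 ≤ n
    have hkn : k ≤ n := h.le
    have hknR : (k:ℝ) < (n:ℝ) := by exact_mod_cast h
    have hd1 : ((n:ℝ) - k) ≠ 0 := by linarith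
    have hd2 : ((n:ℝ) + 1 - k) ≠ 0 := by linarith
    have hd3 : ((n:ℝ) + 1) ≠ 0 := by positivity
    have hd4 : ((n:ℝ) + 2) ≠ 0 := by positivity
    have hd5 : ((k:ℝ) + 1) ≠ 0 := by positivity
    -- e1 : C(n+1,k+1) * (n-k) = C(n,k+1) * (n+1)
    have t1 := Nat.choose_mul_succ_eq n (k+1)
    rw [show n+1-(k+1) = n-k from by omega] at t1
    have e1 : ((n+1).choose (k+1) : ℝ) * ((n:ℝ) - k) = (n.choose (k+1) : ℝ) * ((n:ℝ)+1) := by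
      have := congrArg (Nat.cast (R := ℝ)) t1
      push_cast [Nat.cast_sub hkn] at this
      linarith
    have t2 := Nat.choose_mul_succ_eq (n+1) (k+1)
    rw [show n+1+1-(k+1) = n+1-k from by omega] at t2
    have e2 : ((n+2).choose (k+1) : ℝ) * ((n:ℝ)+1 - k) = ((n+1).choose (k+1) : ℝ) * ((n:ℝ)+2) := by
      have := congrArg (Nat.cast (R := ℝ)) t2
      push_cast [Nat.cast_sub (show k ≤ n+1 from by omega)] at this
      push_cast at this ⊢
      linarith
    have t3 := Nat.choose_mul_succ_eq (n+k+1) (k+1)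
    rw [show n+k+1+1-(k+1) = n+1 from by omega] at t3
    have e3 : ((n+k+2).choose (k+1) : ℝ) * ((n:ℝ)+1) = ((n+k+1).choose (k+1) : ℝ) * ((n:ℝ)+(k:ℝ)+2) := by
      have := congrArg (Nat.cast (R := ℝ)) t3
      push_cast at this ⊢
      linarith
    have t4 := Nat.choose_mul_succ_eq (n+k+2) (k+1)
    rw [show n+k+2+1-(k+1) = n+2 from by omega] at t4
    have e4 : ((n+k+3).choose (k+1) : ℝ) * ((n:ℝ)+2) = ((n+k+2).choose (k+1) : ℝ) * ((n:ℝ)+(k:ℝ)+3) := by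
      have := congrArg (Nat.cast (R := ℝ)) t4
      push_cast at this ⊢
      linarith
    have t5 := Nat.choose_succ_right_eq (n+1) k
    rw [show n+1-k = n+1-k from rfl] at t5
    have e5 : ((n+1).choose k : ℝ) * ((n:ℝ)+1 - k) = ((n+1).choose (k+1) : ℝ) * ((k:ℝ)+1) := by
      have := congrArg (Nat.cast (R := ℝ)) t5
      push_cast [Nat.cast_sub (show k ≤ n+1 from by omega)] at this
      push_cast at this ⊢
      linarith
    have t6 := Nat.choose_succ_right_eq (n+k+1) k
    rw [show n+k+1-k = n+1 from by omega] at t6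
    have e6 : ((n+k+1).choose k : ℝ) * ((n:ℝ)+1) = ((n+k+1).choose (k+1) : ℝ) * ((k:ℝ)+1) := by
      have := congrArg (Nat.cast (R := ℝ)) t6
      push_cast at this ⊢
      linarith
    -- division forms
    have hc1 : ((n+1).choose (k+1) : ℝ) = (n.choose (k+1) : ℝ) * ((n:ℝ)+1) / ((n:ℝ) - k) :=
      (eq_div_iff hd1).mpr e1
    have hc2 : ((n+2).choose (k+1) : ℝ) = ((n+1).choose (k+1) : ℝ) * ((n:ℝ)+2) / ((n:ℝ)+1 - k) :=
      (eq_div_iff hd2).mpr e2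
    have hc3 : ((n+k+2).choose (k+1) : ℝ) = ((n+k+1).choose (k+1) : ℝ) * ((n:ℝ)+(k:ℝ)+2) / ((n:ℝ)+1) :=
      (eq_div_iff hd3).mpr e3
    have hc4 : ((n+k+3).choose (k+1) : ℝ) = ((n+k+2).choose (k+1) : ℝ) * ((n:ℝ)+(k:ℝ)+3) / ((n:ℝ)+2) :=
      (eq_div_iff hd4).mpr e4
    have hc5 : ((n+1).choose k : ℝ) = ((n+1).choose (k+1) : ℝ) * ((k:ℝ)+1) / ((n:ℝ)+1 - k) :=
      (eq_div_iff hd2).mpr e5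
    have hc6 : ((n+k+1).choose k : ℝ) = ((n+k+1).choose (k+1) : ℝ) * ((k:ℝ)+1) / ((n:ℝ)+1) :=
      (eq_div_iff hd3).mpr e6
    simp only [Fap, Gap]
    rw [show n+2+(k+1) = n+k+3 from by omega, show n+1+(k+1) = n+k+2 from by omega,
      show n+(k+1) = n+k+1 from by omega, show n+1+k = n+k+1 from by omega]
    rw [hc2, hc4, hc5, hc6, hc1, hc3]
    push_cast
    field_simp
    ring
  · rcases Nat.eq_or_lt_of_le h with hnk | h2
    · -- k = n
      have hk : k = n := hnk.symm
      subst hk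
      simp only [Fap, Gap]
      rw [show k+2+(k+1) = 2*k+3 from by omega, show k+1+(k+1) = 2*k+2 from by omega,
        show k+1+k = 2*k+1 from by omega]
      rw [Nat.choose_succ_self_right (k+1), Nat.choose_self (k+1), Nat.choose_succ_self k,
        Nat.choose_succ_self_right k]
      have hd4 : ((k:ℝ) + 2) ≠ 0 := by positivity
      have hd3 : ((k:ℝ) + 1) ≠ 0 := by positivity
      have tw := Nat.add_one_mul_choose_eq (2*k+1) k
      have ew : ((2*k+2).choose (k+1) : ℝ) * ((k:ℝ)+1) = ((2*k+1).choose k : ℝ) * (2*(k:ℝ)+2) := by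
        have := congrArg (Nat.cast (R := ℝ)) tw
        push_cast [Nat.succ_eq_add_one] at this ⊢
        linarith
      have tv := Nat.choose_mul_succ_eq (2*k+2) (k+1)
      rw [show 2*k+2+1-(k+1) = k+2 from by omega] at tv
      have ev : ((2*k+3).choose (k+1) : ℝ) * ((k:ℝ)+2) = ((2*k+2).choose (k+1) : ℝ) * (2*(k:ℝ)+3) := by
        have := congrArg (Nat.cast (R := ℝ)) tv
        push_cast at this ⊢
        linarith
      have hv : ((2*k+3).choose (k+1) : ℝ) = ((2*k+2).choose (k+1) : ℝ) * (2*(k:ℝ)+3) / ((k:ℝ)+2) :=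
        (eq_div_iff hd4).mpr ev
      have hw : ((2*k+2).choose (k+1) : ℝ) = ((2*k+1).choose k : ℝ) * (2*(k:ℝ)+2) / ((k:ℝ)+1) :=
        (eq_div_iff hd3).mpr ew
      rw [hv, hw]
      push_cast
      field_simp
      ring
    · rcases Nat.eq_or_lt_of_le h2 with hnk | h3
      · -- k = n+1
        have hk : k = n + 1 := hnk.symm
        subst hk
        simp only [Fap, Gap]
        rw [show n+2+(n+1+1) = 2*n+4 from by omega, show n+1+(n+1+1) = 2*n+3 from by omega,
          show n+1+(n+1) = 2*n+2 from by omega, show n+1+1 = n+2 from rfl]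
        rw [show n+(n+2) = 2*n+2 from by omega]
        rw [Nat.choose_self (n+2), Nat.choose_self (n+1)]
        rw [show (n+1).choose (n+2) = 0 from Nat.choose_eq_zero_of_lt (by omega),
          show n.choose (n+2) = 0 from Nat.choose_eq_zero_of_lt (by omega)]
        have hd4 : ((n:ℝ) + 2) ≠ 0 := by positivity
        have tu := Nat.add_one_mul_choose_eq (2*n+3) (n+1)
        have eu : ((2*n+4).choose (n+2) : ℝ) * ((n:ℝ)+2) = ((2*n+3).choose (n+1) : ℝ) * (2*(n:ℝ)+4) := by
          have := congrArg (Nat.cast (R := ℝ)) tu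
          push_cast [Nat.succ_eq_add_one] at this ⊢
          linarith
        have tv := Nat.choose_mul_succ_eq (2*n+2) (n+1)
        rw [show 2*n+2+1-(n+1) = n+2 from by omega] at tv
        have ev : ((2*n+3).choose (n+1) : ℝ) * ((n:ℝ)+2) = ((2*n+2).choose (n+1) : ℝ) * (2*(n:ℝ)+3) := by
          have := congrArg (Nat.cast (R := ℝ)) tv
          push_cast at this ⊢
          linarith
        have hu : ((2*n+4).choose (n+2) : ℝ) = ((2*n+3).choose (n+1) : ℝ) * (2*(n:ℝ)+4) / ((n:ℝ)+2) :=
          (eq_div_iff hd4).mpr eu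
        have hv : ((2*n+3).choose (n+1) : ℝ) = ((2*n+2).choose (n+1) : ℝ) * (2*(n:ℝ)+3) / ((n:ℝ)+2) :=
          (eq_div_iff hd4).mpr ev
        rw [hu, hv]
        push_cast
        field_simp
        ring
      · -- k ≥ n+2
        have z1 : Fap (n+2) (k+1) = 0 := by simp [Fap, Nat.choose_eq_zero_of_lt (show n+2 < k+1 by omega)]
        have z2 : Fap (n+1) (k+1) = 0 := by simp [Fap, Nat.choose_eq_zero_of_lt (show n+1 < k+1 by omega)]
        have z3 : Fap n (k+1) = 0 := by simp [Fap, Nat.choose_eq_zero_of_lt (show n < k+1 by omega)]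
        have z4 : Fap (n+1) k = 0 := by simp [Fap, Nat.choose_eq_zero_of_lt (show n+1 < k by omega)]
        simp [Gap, z1, z2, z3, z4]

lemma apery_rec (n : ℕ) :
    ((n:ℝ)+2)^3 * aseq (n+2) = (34*(n:ℝ)^3+153*(n:ℝ)^2+231*(n:ℝ)+117) * aseq (n+1)
      - ((n:ℝ)+1)^3 * aseq n := by
  have hA : aseq n = ∑ k ∈ Finset.range (n+3), Fap n k := aseq_ext (by omega)
  have hB : aseq (n+1) = ∑ k ∈ Finset.range (n+3), Fap (n+1) k := aseq_ext (by omega)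
  have hC : aseq (n+2) = ∑ k ∈ Finset.range (n+3), Fap (n+2) k := rfl
  have hsum : ∑ k ∈ Finset.range (n+3),
      (((n:ℝ)+2)^3 * Fap (n+2) k - (34*(n:ℝ)^3+153*(n:ℝ)^2+231*(n:ℝ)+117) * Fap (n+1) k
        + ((n:ℝ)+1)^3 * Fap n k) = Gap n (n+2) := by
    rw [Finset.sum_range_succ' _ (n+2)]
    rw [key0]
    have : ∀ k ∈ Finset.range (n+2), (((n:ℝ)+2)^3 * Fap (n+2) (k+1)
        - (34*(n:ℝ)^3+153*(n:ℝ)^2+231*(n:ℝ)+117) * Fap (n+1) (k+1)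
        + ((n:ℝ)+1)^3 * Fap n (k+1)) = Gap n (k+1) - Gap n k := fun k _ => keyS n k
    rw [Finset.sum_congr rfl this, Finset.sum_range_sub (Gap n) (n+2)]
    ring
  have hG : Gap n (n+2) = 0 := by
    have : Fap (n+1) (n+2) = 0 := Fap_eq_zero (by omega)
    simp [Gap, this]
  rw [hG] at hsum
  rw [Finset.sum_add_distrib, Finset.sum_sub_distrib, ← Finset.mul_sum, ← Finset.mul_sum,
    ← Finset.mul_sum] at hsum
  rw [hA, hB, hC]
  linarith [hsum]

lemma aseq_pos (n : ℕ) : 0 < aseq n := by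
  rw [aseq_eq]
  apply Finset.sum_pos' (fun k _ => Fap_nonneg n k)
  exact ⟨0, Finset.mem_range.2 (by omega), by simp [Fap]⟩

lemma aseq_mono (n : ℕ) : aseq n ≤ aseq (n+1) := by
  rw [aseq_ext (show n+1 ≤ n+2 by omega), aseq_eq]
  apply Finset.sum_le_sum
  intro k _
  unfold Fap
  have h1 : (n.choose k : ℝ) ≤ ((n+1).choose k : ℝ) := by
    exact_mod_cast Nat.choose_le_choose k (by omega)
  have h2 : ((n+k).choose k : ℝ) ≤ ((n+1+k).choose k : ℝ) := by
    exact_mod_cast Nat.choose_le_choose k (by omega)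
  have h1' : (n.choose k : ℝ)^2 ≤ ((n+1).choose k : ℝ)^2 :=
    pow_le_pow_left₀ (Nat.cast_nonneg _) h1 2
  have h2' : ((n+k).choose k : ℝ)^2 ≤ ((n+1+k).choose k : ℝ)^2 :=
    pow_le_pow_left₀ (Nat.cast_nonneg _) h2 2
  exact mul_le_mul h1' h2' (by positivity) (by positivity)

lemma logconvex (m : ℕ) : aseq (m+1) ^ 2 < aseq m * aseq (m+2) := by
  induction m with
  | zero =>
    have h0 : aseq 0 = 1 := by simp [aseq]
    have h1 : aseq 1 = 5 := by
      norm_num [aseq, Finset.sum_range_succ, Nat.choose]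
    have h2 : aseq 2 = 73 := by
      norm_num [aseq, Finset.sum_range_succ, Nat.choose]
    rw [h0, h1, h2]; norm_num
  | succ m ih =>
    have hApos := aseq_pos m
    have hBpos := aseq_pos (m+1)
    have hCpos := aseq_pos (m+2)
    have h1 := apery_rec m
    have h2 := apery_rec (m+1)
    rw [show m+1+2 = m+3 from rfl, show m+1+1 = m+2 from rfl] at h2
    push_cast at h2
    have hBC : aseq (m+1) ≤ aseq (m+2) := aseq_mono (m+1)
    set A := aseq m with hA
    set B := aseq (m+1) with hB
    set C := aseq (m+2) with hC
    set D := aseq (m+3) with hD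
    -- abbreviations
    have h1C : ((m:ℝ)+2)^3 * C^2
        = (34*(m:ℝ)^3+153*(m:ℝ)^2+231*(m:ℝ)+117) * (B*C) - ((m:ℝ)+1)^3 * (A*C) := by
      linear_combination C * h1
    have key1 : ((m:ℝ)+2)^3 * C^2
        < (34*(m:ℝ)^3+153*(m:ℝ)^2+231*(m:ℝ)+117) * (B*C) - ((m:ℝ)+1)^3 * B^2 := by
      nlinarith [ih, pow_pos (show (0:ℝ) < (m:ℝ)+1 by positivity) 3]
    have h2B : ((m:ℝ)+3)^3 * (B*D)
        = (34*(m:ℝ)^3+255*(m:ℝ)^2+639*(m:ℝ)+535) * (B*C) - ((m:ℝ)+2)^3 * B^2 := by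
      linear_combination B * h2
    have hm0 : (0:ℝ) ≤ (m:ℝ) := Nat.cast_nonneg m
    -- K1 * (B*C) ≤ K2 * B^2 with K1, K2 explicit
    have keyK : (((m:ℝ)+3)^3 * (34*(m:ℝ)^3+153*(m:ℝ)^2+231*(m:ℝ)+117)
          - ((m:ℝ)+2)^3 * (34*(m:ℝ)^3+255*(m:ℝ)^2+639*(m:ℝ)+535)) * (B*C)
        ≤ (((m:ℝ)+3)^3 * ((m:ℝ)+1)^3 - ((m:ℝ)+2)^6) * B^2 := by
      set K1 : ℝ := ((m:ℝ)+3)^3 * (34*(m:ℝ)^3+153*(m:ℝ)^2+231*(m:ℝ)+117)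
          - ((m:ℝ)+2)^3 * (34*(m:ℝ)^3+255*(m:ℝ)^2+639*(m:ℝ)+535) with hK1
      set K2 : ℝ := ((m:ℝ)+3)^3 * ((m:ℝ)+1)^3 - ((m:ℝ)+2)^6 with hK2
      have h12 : K1 ≤ K2 := by
        have e : K2 - K1 = 48*(m:ℝ)^4 + 432*(m:ℝ)^3 + 1428*(m:ℝ)^2 + 2052*(m:ℝ) + 1084 := by
          rw [hK1, hK2]; ring
        nlinarith [pow_nonneg hm0 4, pow_nonneg hm0 3, pow_nonneg hm0 2, hm0, e]
      have hK2neg : K2 ≤ 0 := by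
        have e : -K2 = 3*(m:ℝ)^4 + 24*(m:ℝ)^3 + 69*(m:ℝ)^2 + 84*(m:ℝ) + 37 := by
          rw [hK2]; ring
        nlinarith [pow_nonneg hm0 4, pow_nonneg hm0 3, pow_nonneg hm0 2, hm0, e]
      have hBB : B^2 ≤ B*C := by nlinarith
      calc K1 * (B*C) ≤ K2 * (B*C) := by
              apply mul_le_mul_of_nonneg_right h12 (by positivity)
        _ ≤ K2 * B^2 := mul_le_mul_of_nonpos_left hBB hK2neg
    have final : (((m:ℝ)+3)^3 * ((m:ℝ)+2)^3) * C^2 < (((m:ℝ)+3)^3 * ((m:ℝ)+2)^3) * (B*D) := by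
      have s1 : ((m:ℝ)+3)^3 * (((m:ℝ)+2)^3 * C^2)
          < ((m:ℝ)+3)^3 * ((34*(m:ℝ)^3+153*(m:ℝ)^2+231*(m:ℝ)+117) * (B*C) - ((m:ℝ)+1)^3 * B^2) :=
        mul_lt_mul_of_pos_left key1 (by positivity)
      have e2 : ((m:ℝ)+3)^3 * ((34*(m:ℝ)^3+153*(m:ℝ)^2+231*(m:ℝ)+117) * (B*C) - ((m:ℝ)+1)^3 * B^2)
          = (((m:ℝ)+3)^3 * ((m:ℝ)+2)^3) * (B*D)
            + ((((m:ℝ)+3)^3 * (34*(m:ℝ)^3+153*(m:ℝ)^2+231*(m:ℝ)+117)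
                - ((m:ℝ)+2)^3 * (34*(m:ℝ)^3+255*(m:ℝ)^2+639*(m:ℝ)+535)) * (B*C)
              - ((((m:ℝ)+3)^3 * ((m:ℝ)+1)^3 - ((m:ℝ)+2)^6) * B^2)) := by
        linear_combination (-((m:ℝ)+2)^3) * h2B
      linarith [s1, keyK, e2]
    have := lt_of_mul_lt_mul_left final (by positivity :
        (0:ℝ) ≤ ((m:ℝ)+3)^3 * ((m:ℝ)+2)^3)
    push_cast
    linarith [this]

lemma rho_lt_succ (m : ℕ) : rho m < rho (m+1) := by
  have h := logconvex m
  have h1 := aseq_pos m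
  have h2 := aseq_pos (m+1)
  rw [rho, rho, div_lt_div_iff₀ h1 h2]
  nlinarith [h]

lemma rho_strictMono : StrictMono rho := strictMono_nat_of_lt_succ rho_lt_succ

/-- The sequence `ρ n = a (n+1) / a n` is increasing for `n ≥ 2`. -/
theorem rho_increasing : StrictMonoOn rho {n : ℕ | 2 ≤ n} := by
  exact rho_strictMono.strictMonoOn _
end
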